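/- A standard Tarskian consequence relation ⊢ on L is axiomatizable by a finite Set-Fmla Hilbert system if, and only if, there is no strictly increasing sequence ⊢_0 ⊊ ⊢_1 ⊊ ⊢_2 ⊊ … of standard Tarskian consequence relations on L such that ⊢ = sup_{i∈ω} ⊢_i. -/

import Mathlib

/-- Formulas over the signature Σ with unary ¬, ∘ and binary ∧, ∨, →,
freely generated from a denumerable set of propositional variables. -/
inductive Fm : Type where
  | var : ℕ → Fm
  | neg : Fm → Fm
  | circ : Fm → Fm
  | conj : Fm → Fm → Fm
  | disj : Fm → Fm → Fm
  | imp : Fm → Fm → Fm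
deriving DecidableEq

/-- Substitutions act homomorphically on formulas. -/
def subst (σ : ℕ → Fm) : Fm → Fm
  | .var n => σ n
  | .neg φ => .neg (subst σ φ)
  | .circ φ => .circ (subst σ φ)
  | .conj φ ψ => .conj (subst σ φ) (subst σ ψ)
  | .disj φ ψ => .disj (subst σ φ) (subst σ ψ)
  | .imp φ ψ => .imp (subst σ φ) (subst σ ψ)

/-- A Set-Fmla rule schema: a finite antecedent and a single succedent formula. -/
abbrev Rule : Type := Finset Fm × Fm

/-- Derivability in a Set-Fmla Hilbert system: `Derives H Γ φ` holds iff φ can be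
obtained from members of Γ by finitely many applications of substitution instances
of rules of `H`. -/
inductive Derives (H : Set Rule) : Set Fm → Fm → Prop where
  | prem : ∀ {Γ : Set Fm} {φ : Fm}, φ ∈ Γ → Derives H Γ φ
  | rule : ∀ {Γ : Set Fm} (r : Rule) (σ : ℕ → Fm), r ∈ H →
      (∀ ψ ∈ r.1, Derives H Γ (subst σ ψ)) → Derives H Γ (subst σ r.2)

/-- One-dimensional Set-Fmla consequence judgements. -/
abbrev ConsRel : Type := Set Fm → Fm → Prop

/-- A Tarskian consequence relation: reflexivity, monotonicity and cut. -/
def Tarskian (R : ConsRel) : Prop :=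
  (∀ (Γ : Set Fm) (φ : Fm), φ ∈ Γ → R Γ φ) ∧
  (∀ (Γ Γ' : Set Fm) (φ : Fm), Γ ⊆ Γ' → R Γ φ → R Γ' φ) ∧
  (∀ (Γ Δ : Set Fm) (φ : Fm), (∀ ψ ∈ Δ, R Γ ψ) → R (Γ ∪ Δ) φ → R Γ φ)

/-- Substitution-invariance. -/
def SubstInvariant (R : ConsRel) : Prop :=
  ∀ (σ : ℕ → Fm) (Γ : Set Fm) (φ : Fm), R Γ φ → R (subst σ '' Γ) (subst σ φ)

/-- Finitariness. -/
def Finitary (R : ConsRel) : Prop :=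
  ∀ (Γ : Set Fm) (φ : Fm), R Γ φ → ∃ Γ' ⊆ Γ, Γ'.Finite ∧ R Γ' φ

/-- Standard = Tarskian + substitution-invariant + finitary. -/
def StandardCR (R : ConsRel) : Prop := Tarskian R ∧ SubstInvariant R ∧ Finitary R

/-- Inclusion of consequence relations. -/
def leCR (R S : ConsRel) : Prop := ∀ (Γ : Set Fm) (φ : Fm), R Γ φ → S Γ φ

/-- `R` is the supremum of the collection `C` in the complete lattice of standard
Tarskian consequence relations: it is a standard upper bound below every
standard upper bound. -/
def IsSupCR (R : ConsRel) (C : Set ConsRel) : Prop :=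
  StandardCR R ∧ (∀ S ∈ C, leCR S R) ∧
  ∀ S : ConsRel, StandardCR S → (∀ T ∈ C, leCR T S) → leCR R S

def Fm.enc : Fm → ℕ
  | .var n => Nat.pair 0 n
  | .neg φ => Nat.pair 1 φ.enc
  | .circ φ => Nat.pair 2 φ.enc
  | .conj φ ψ => Nat.pair 3 (Nat.pair φ.enc ψ.enc)
  | .disj φ ψ => Nat.pair 4 (Nat.pair φ.enc ψ.enc)
  | .imp φ ψ => Nat.pair 5 (Nat.pair φ.enc ψ.enc)

theorem Fm.enc_inj : Function.Injective Fm.enc := by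
  intro φ
  induction φ <;> intro ψ h <;> cases ψ <;>
    simp_all [Fm.enc, Nat.pair_eq_pair] <;> solve_by_elim

instance : Countable Fm := ⟨⟨Fm.enc, Fm.enc_inj⟩⟩

theorem subst_var (φ : Fm) : subst Fm.var φ = φ := by
  induction φ <;> simp [subst, *]

theorem subst_subst (σ τ : ℕ → Fm) (φ : Fm) :
    subst σ (subst τ φ) = subst (fun n => subst σ (τ n)) φ := by
  induction φ <;> simp [subst, *]

theorem derives_mono_ctx {H : Set Rule} {Γ : Set Fm} {φ : Fm} (h : Derives H Γ φ) :
    ∀ {Γ' : Set Fm}, Γ ⊆ Γ' → Derives H Γ' φ := by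
  induction h with
  | prem hm => exact fun hsub => Derives.prem (hsub hm)
  | rule r σ hr hp ih => exact fun hsub => Derives.rule r σ hr (fun ψ hψ => ih ψ hψ hsub)

theorem derives_cut' {H : Set Rule} {Γ'' : Set Fm} {φ : Fm} (h : Derives H Γ'' φ) :
    ∀ {Γ Δ : Set Fm}, Γ'' = Γ ∪ Δ → (∀ ψ ∈ Δ, Derives H Γ ψ) → Derives H Γ φ := by
  induction h with
  | prem hm =>
    rintro Γ Δ rfl hΔ
    rcases hm with hm | hm
    · exact Derives.prem hm
    · exact hΔ _ hm
  | rule r σ hr hp ih =>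
    rintro Γ Δ rfl hΔ
    exact Derives.rule r σ hr (fun ψ hψ => ih ψ hψ rfl hΔ)

theorem derives_subst {H : Set Rule} {Γ : Set Fm} {φ : Fm} (σ : ℕ → Fm)
    (h : Derives H Γ φ) : Derives H (subst σ '' Γ) (subst σ φ) := by
  induction h with
  | prem hm => exact Derives.prem ⟨_, hm, rfl⟩
  | rule r τ hr hp ih =>
    rw [subst_subst]
    exact Derives.rule r (fun n => subst σ (τ n)) hr
      (fun ψ hψ => by rw [← subst_subst]; exact ih ψ hψ)

theorem derives_mono_H {H H' : Set Rule} (hs : H ⊆ H') {Γ : Set Fm} {φ : Fm}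
    (h : Derives H Γ φ) : Derives H' Γ φ := by
  induction h with
  | prem hm => exact Derives.prem hm
  | rule r σ hr hp ih => exact Derives.rule r σ (hs hr) ih

theorem derives_fin {H : Set Rule} {Γ : Set Fm} {φ : Fm} (h : Derives H Γ φ) :
    ∃ H' Γ', H' ⊆ H ∧ H'.Finite ∧ Γ' ⊆ Γ ∧ Γ'.Finite ∧ Derives H' Γ' φ := by
  induction h with
  | prem hm =>
    exact ⟨∅, {_}, by simp, Set.finite_empty, Set.singleton_subset_iff.2 hm,
      Set.finite_singleton _, Derives.prem rfl⟩
  | rule r σ hr hp ih =>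
    have ih' : ∀ ψ : Fm, ∃ p : Set Rule × Set Fm,
        ψ ∈ r.1 → p.1 ⊆ H ∧ p.1.Finite ∧ p.2 ⊆ Γ ∧ p.2.Finite ∧
          Derives p.1 p.2 (subst σ ψ) := by
      intro ψ
      by_cases hψ : ψ ∈ r.1
      · obtain ⟨H', Γ', hh⟩ := ih ψ hψ
        exact ⟨(H', Γ'), fun _ => hh⟩
      · exact ⟨(∅, ∅), fun hc => absurd hc hψ⟩
    choose p hp using ih'
    refine ⟨insert r (⋃ ψ ∈ (↑r.1 : Set Fm), (p ψ).1),
      ⋃ ψ ∈ (↑r.1 : Set Fm), (p ψ).2, ?_, ?_, ?_, ?_, ?_⟩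
    · refine Set.insert_subset hr ?_
      refine Set.iUnion₂_subset fun ψ hψ => (hp ψ hψ).1
    · exact Set.Finite.insert r (Set.Finite.biUnion r.1.finite_toSet
        (fun ψ hψ => (hp ψ hψ).2.1))
    · exact Set.iUnion₂_subset fun ψ hψ => (hp ψ hψ).2.2.1
    · exact Set.Finite.biUnion r.1.finite_toSet (fun ψ hψ => (hp ψ hψ).2.2.2.1)
    · refine Derives.rule r σ (Set.mem_insert _ _) (fun ψ hψ => ?_)
      have hd := (hp ψ hψ).2.2.2.2
      refine derives_mono_ctx (derives_mono_H ?_ hd) ?_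
      · exact (Set.subset_iUnion₂ (s := fun ψ _ => (p ψ).1) ψ
          (Finset.mem_coe.2 hψ)).trans (Set.subset_insert _ _)
      · exact Set.subset_iUnion₂ (s := fun ψ _ => (p ψ).2) ψ (Finset.mem_coe.2 hψ)

theorem standard_derives (H : Set Rule) : StandardCR (Derives H) := by
  refine ⟨⟨fun _ _ => Derives.prem, fun _ _ _ hs h => derives_mono_ctx h hs,
    fun Γ Δ φ hΔ h => derives_cut' h rfl hΔ⟩,
    fun σ _ _ h => derives_subst σ h, fun Γ φ h => ?_⟩
  obtain ⟨H', Γ', hH'sub, _, hΓ'sub, hΓ'fin, hd⟩ := derives_fin h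
  exact ⟨Γ', hΓ'sub, hΓ'fin, derives_mono_H hH'sub hd⟩

theorem closed_under {H : Set Rule} {S : ConsRel} (hT : Tarskian S)
    (hSub : SubstInvariant S) (hr : ∀ r ∈ H, S ↑r.1 r.2) :
    ∀ {Γ : Set Fm} {φ : Fm}, Derives H Γ φ → S Γ φ := by
  intro Γ φ h
  induction h with
  | prem hm => exact hT.1 _ _ hm
  | rule r σ hrH hp ih =>
    have h1 : S (subst σ '' ↑r.1) (subst σ r.2) := hSub σ _ _ (hr r hrH)
    have h2 : S (Γ ∪ subst σ '' ↑r.1) (subst σ r.2) :=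
      hT.2.1 _ _ _ Set.subset_union_right h1
    refine hT.2.2 _ _ _ ?_ h2
    rintro ψ ⟨χ, hχ, rfl⟩
    exact ih χ (Finset.mem_coe.1 hχ)

theorem derives_rules {H : Set Rule} {r : Rule} (hr : r ∈ H) : Derives H ↑r.1 r.2 := by
  have := Derives.rule (H := H) r Fm.var hr
    (fun ψ hψ => by rw [subst_var]; exact Derives.prem (Finset.mem_coe.2 hψ))
  rwa [subst_var] at this

theorem chain_mono {seq : ℕ → ConsRel} (h : ∀ i, leCR (seq i) (seq (i + 1))) :
    ∀ {i j : ℕ}, i ≤ j → leCR (seq i) (seq j) := by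
  intro i j hij
  induction hij with
  | refl => exact fun _ _ hh => hh
  | step _ ih => exact fun Γ φ hh => h _ _ _ (ih Γ φ hh)

theorem forward_dir (R : ConsRel) (H : Set Rule) (hHfin : H.Finite)
    (hax : ∀ (Γ : Set Fm) (φ : Fm), Derives H Γ φ ↔ R Γ φ)
    (seq : ℕ → ConsRel) (hstd : ∀ i, StandardCR (seq i))
    (hchain : ∀ i, leCR (seq i) (seq (i + 1)) ∧ seq i ≠ seq (i + 1))
    (hsup : IsSupCR R {S : ConsRel | ∃ i, S = seq i}) : False := by
  have hmono : ∀ {i j : ℕ}, i ≤ j → leCR (seq i) (seq j) :=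
    fun {i j} => chain_mono (fun i => (hchain i).1)
  -- the union relation
  set U : ConsRel := fun Γ φ => ∃ i, seq i Γ φ with hU
  have hUstd : StandardCR U := by
    refine ⟨⟨fun Γ φ hm => ⟨0, (hstd 0).1.1 _ _ hm⟩,
      fun Γ Γ' φ hs ⟨i, hi⟩ => ⟨i, (hstd i).1.2.1 _ _ _ hs hi⟩, ?_⟩,
      fun σ Γ φ ⟨i, hi⟩ => ⟨i, (hstd i).2.1 σ _ _ hi⟩,
      fun Γ φ ⟨i, hi⟩ => by
        obtain ⟨Γ', hsub, hfin, hh⟩ := (hstd i).2.2 _ _ hi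
        exact ⟨Γ', hsub, hfin, ⟨i, hh⟩⟩⟩
    rintro Γ Δ φ hΔ ⟨i, hi⟩
    obtain ⟨Γ', hΓ'sub, hΓ'fin, hΓ'⟩ := (hstd i).2.2 _ _ hi
    have hΔ'fin : (Γ' \ Γ).Finite := hΓ'fin.diff
    have hj : ∀ ψ : Fm, ∃ j, ψ ∈ Γ' \ Γ → seq j Γ ψ := by
      intro ψ
      by_cases hψ : ψ ∈ Γ' \ Γ
      · obtain ⟨j, hjj⟩ := hΔ ψ ((hΓ'sub hψ.1).resolve_left hψ.2)
        exact ⟨j, fun _ => hjj⟩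
      · exact ⟨0, fun hc => absurd hc hψ⟩
    choose j hjspec using hj
    refine ⟨max i (hΔ'fin.toFinset.sup j), (hstd _).1.2.2 Γ (Γ' \ Γ) φ ?_ ?_⟩
    · intro ψ hψ
      exact hmono (le_trans (Finset.le_sup (hΔ'fin.mem_toFinset.2 hψ))
        (le_max_right _ _)) _ _ (hjspec ψ hψ)
    · refine (hstd _).1.2.1 _ _ _ (fun x hx => ?_) (hmono (le_max_left _ _) _ _ hΓ')
      by_cases hxΓ : x ∈ Γ
      · exact Or.inl hxΓ
      · exact Or.inr ⟨hx, hxΓ⟩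
  have hRU : leCR R U :=
    hsup.2.2 U hUstd (by rintro T ⟨i, rfl⟩ Γ φ h; exact ⟨i, h⟩)
  -- uniform bound for the rules
  have hidx : ∀ r : Rule, ∃ i, r ∈ H → seq i ↑r.1 r.2 := by
    intro r
    by_cases hr : r ∈ H
    · obtain ⟨i, hi⟩ := hRU _ _ ((hax _ _).1 (derives_rules hr))
      exact ⟨i, fun _ => hi⟩
    · exact ⟨0, fun hc => absurd hc hr⟩
  choose idx hidxspec using hidx
  set N := hHfin.toFinset.sup idx with hN
  have hrulesN : ∀ r ∈ H, seq N ↑r.1 r.2 := by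
    intro r hr
    exact hmono (Finset.le_sup (hHfin.mem_toFinset.2 hr)) _ _ (hidxspec r hr)
  have hRN : leCR R (seq N) := by
    intro Γ φ h
    exact closed_under (hstd N).1 (hstd N).2.1 hrulesN ((hax Γ φ).2 h)
  have hNR : leCR (seq (N + 1)) R := hsup.2.1 _ ⟨N + 1, rfl⟩
  refine (hchain N).2 ?_
  funext Γ φ
  exact propext ⟨fun h => (hchain N).1 _ _ h, fun h => hRN _ _ (hNR _ _ h)⟩

theorem backward_dir (R : ConsRel) (hR : StandardCR R)
    (hnoax : ¬ ∃ H : Set Rule, H.Finite ∧ ∀ (Γ : Set Fm) (φ : Fm), Derives H Γ φ ↔ R Γ φ) :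
    ∃ seq : ℕ → ConsRel,
      (∀ i : ℕ, StandardCR (seq i)) ∧
      (∀ i : ℕ, leCR (seq i) (seq (i + 1)) ∧ seq i ≠ seq (i + 1)) ∧
      IsSupCR R {S : ConsRel | ∃ i : ℕ, S = seq i} := by
  classical
  set HR : Set Rule := {r : Rule | R ↑r.1 r.2} with hHRdef
  -- R is below Derives HR
  have hRD : ∀ {Γ : Set Fm} {φ : Fm}, R Γ φ → Derives HR Γ φ := by
    intro Γ φ h
    obtain ⟨Γ₀, hsub, hfin, h₀⟩ := hR.2.2 _ _ h
    have hmem : ((hfin.toFinset, φ) : Rule) ∈ HR := by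
      show R ↑hfin.toFinset φ
      rwa [Set.Finite.coe_toFinset]
    have hder := derives_rules hmem
    rw [Set.Finite.coe_toFinset] at hder
    exact derives_mono_ctx hder hsub
  have hne : HR.Nonempty := by
    refine ⟨(({Fm.var 0} : Finset Fm), Fm.var 0), ?_⟩
    show R ↑({Fm.var 0} : Finset Fm) (Fm.var 0)
    exact hR.1.1 _ _ (by simp)
  obtain ⟨f, hf⟩ := (Set.to_countable HR).exists_eq_range hne
  -- the extension step
  have step : ∀ F : Set Rule, ∃ r : Rule, F.Finite → F ⊆ HR →
      r ∈ HR ∧ ∃ (Γ : Set Fm) (φ : Fm), ¬ Derives F Γ φ ∧ Derives (insert r F) Γ φ := by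
    intro F
    by_cases hF : F.Finite ∧ F ⊆ HR
    · have hle : ∀ {Γ : Set Fm} {φ : Fm}, Derives F Γ φ → R Γ φ :=
        closed_under hR.1 hR.2.1 (fun r hr => hF.2 hr)
      have hnoiff : ¬ ∀ (Γ : Set Fm) (φ : Fm), Derives F Γ φ ↔ R Γ φ :=
        fun hiff => hnoax ⟨F, hF.1, hiff⟩
      push_neg at hnoiff
      obtain ⟨Γ, φ, hiff⟩ := hnoiff
      have hkey : R Γ φ ∧ ¬ Derives F Γ φ := by
        rcases hiff with ⟨hd, hnr⟩ | ⟨hnd, hr⟩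
        · exact absurd (hle hd) hnr
        · exact ⟨hr, hnd⟩
      obtain ⟨hRΓφ, hnd⟩ := hkey
      obtain ⟨Γ₀, hsub, hfin, h₀⟩ := hR.2.2 _ _ hRΓφ
      refine ⟨(hfin.toFinset, φ), fun _ _ => ⟨?_, Γ, φ, hnd, ?_⟩⟩
      · show R ↑hfin.toFinset φ
        rwa [Set.Finite.coe_toFinset]
      · have hder := derives_rules (H := insert (hfin.toFinset, φ) F)
          (Set.mem_insert _ _)
        rw [Set.Finite.coe_toFinset] at hder
        exact derives_mono_ctx hder hsub
    · exact ⟨((∅ : Finset Fm), Fm.var 0), fun h1 h2 => absurd ⟨h1, h2⟩ hF⟩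
  choose g hg using step
  set F : ℕ → Set Rule :=
    fun n => Nat.rec ∅ (fun n Fn => insert (g Fn) (insert (f n) Fn)) n with hFdef
  have hFs : ∀ n, F (n + 1) = insert (g (F n)) (insert (f n) (F n)) := fun n => rfl
  have key : ∀ n, (F n).Finite ∧ F n ⊆ HR := by
    intro n
    induction n with
    | zero => exact ⟨Set.finite_empty, Set.empty_subset _⟩
    | succ n ih =>
      have hg' := hg (F n) ih.1 ih.2
      rw [hFs]
      refine ⟨(ih.1.insert _).insert _, ?_⟩
      refine Set.insert_subset hg'.1 (Set.insert_subset ?_ ih.2)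
      rw [hf]; exact ⟨n, rfl⟩
  have hFstep : ∀ n, F n ⊆ F (n + 1) := by
    intro n
    rw [hFs]
    exact (Set.subset_insert _ _).trans (Set.subset_insert _ _)
  have hFmono : ∀ {m n : ℕ}, m ≤ n → F m ⊆ F n := by
    intro m n h
    induction h with
    | refl => exact subset_rfl
    | step _ ih => exact ih.trans (hFstep _)
  refine ⟨fun n => Derives (F n), fun n => standard_derives _, fun n => ⟨?_, ?_⟩, ?_, ?_, ?_⟩
  · exact fun Γ φ h => derives_mono_H (hFstep n) h
  · obtain ⟨_, Γ, φ, hnd, hder⟩ := hg (F n) (key n).1 (key n).2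
    intro heq
    refine hnd ?_
    have hder' : Derives (F (n + 1)) Γ φ := by
      refine derives_mono_H ?_ hder
      rw [hFs]
      exact Set.insert_subset_insert (Set.subset_insert _ _)
    have heq' : Derives (F n) = Derives (F (n + 1)) := heq
    rw [heq']
    exact hder'
  · exact hR
  · rintro S ⟨i, rfl⟩ Γ φ h
    exact closed_under hR.1 hR.2.1 (fun r hr => (key i).2 hr) h
  · intro S hS hub Γ φ h
    obtain ⟨H', Γ', hH'sub, hH'fin, hΓ'sub, hΓ'fin, hd'⟩ := derives_fin (hRD h)
    have hidx2 : ∀ r : Rule, ∃ n, r ∈ H' → r ∈ F n := by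
      intro r
      by_cases hr : r ∈ H'
      · have : r ∈ Set.range f := hf ▸ hH'sub hr
        obtain ⟨n, rfl⟩ := this
        refine ⟨n + 1, fun _ => ?_⟩
        rw [hFs]
        exact Set.mem_insert_iff.2 (Or.inr (Set.mem_insert _ _))
      · exact ⟨0, fun hc => absurd hc hr⟩
    choose idx2 hidx2s using hidx2
    set N := hH'fin.toFinset.sup idx2 with hN
    have hsubN : H' ⊆ F N := fun r hr =>
      hFmono (Finset.le_sup (hH'fin.mem_toFinset.2 hr)) (hidx2s r hr)
    exact hub (Derives (F N)) ⟨N, rfl⟩ _ _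
      (derives_mono_ctx (derives_mono_H hsubN hd') hΓ'sub)

/-- Wójcicki: a standard Tarskian consequence relation is
axiomatizable by a finite Set-Fmla Hilbert system iff there is no strictly
increasing sequence of standard Tarskian consequence relations whose supremum
it is. -/
theorem stmt0 (R : ConsRel) (hR : StandardCR R) :
    (∃ H : Set Rule, H.Finite ∧ ∀ (Γ : Set Fm) (φ : Fm), Derives H Γ φ ↔ R Γ φ) ↔
      ¬ ∃ seq : ℕ → ConsRel,
          (∀ i : ℕ, StandardCR (seq i)) ∧
          (∀ i : ℕ, leCR (seq i) (seq (i + 1)) ∧ seq i ≠ seq (i + 1)) ∧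
          IsSupCR R {S : ConsRel | ∃ i : ℕ, S = seq i} := by
  constructor
  · rintro ⟨H, hHfin, hax⟩ ⟨seq, hstd, hchain, hsup⟩
    exact forward_dir R H hHfin hax seq hstd hchain hsup
  · intro hnochain
    by_contra hnoax
    exact hnochain (backward_dir R hR hnoax)
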